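/- Let i' : Ȳ → X' be a morphism of integral separated finite-type k-schemes extending a closed immersion i : Y ↪ X, where Y ⊆ Ȳ is a dense open with one-dimensional complement with generic point η, and X ⊆ X' is open. Then i'(η) ∉ X: otherwise i'(η) would lie in the closure of i'(Y) inside X, forcing the discrete valuation on k(Y) corresponding to η to have two distinct centers on the separated scheme Y, a contradiction. -/

import Mathlib

set_option maxHeartbeats 1000000
set_option synthInstance.maxHeartbeats 100000
set_option maxHeartbeats 1000000
set_option synthInstance.maxHeartbeats 100000

open AlgebraicGeometry CategoryTheory TopologicalSpace

lemma exists_lift_of_isClosedImmersion {R : CommRingCat} [IsLocalRing ↑R] [IsReduced ↑R]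
    {W V : Scheme} (c : W ⟶ V) [IsClosedImmersion c] (g : Spec R ⟶ V)
    (h : Set.range g.base ⊆ Set.range c.base) : ∃ l : Spec R ⟶ W, l ≫ c = g := by
  classical
  -- choose an affine open around the image of the closed point
  obtain ⟨_, ⟨U0, hU, rfl⟩, hx0U, -⟩ := V.isBasis_affineOpens.exists_subset_of_mem_open
    (Set.mem_univ (g.base (IsLocalRing.closedPoint ↑R))) isOpen_univ
  let U : V.Opens := U0
  have hrangeU : Set.range g.base ⊆ (U : Set V) := by
    rintro _ ⟨t, rfl⟩
    exact U.2.stableUnderGeneralization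
      ((IsLocalRing.specializes_closedPoint t).map g.continuous) hx0U
  have hliftU : Set.range g.base ⊆ Set.range U.ι.base := by
    rwa [Scheme.Opens.range_ι]
  let gU : Spec R ⟶ U.toScheme := IsOpenImmersion.lift U.ι g hliftU
  have hgU : gU ≫ U.ι = g := IsOpenImmersion.lift_fac _ _ _
  let W' : W.Opens := c ⁻¹ᵁ U
  let cU : W'.toScheme ⟶ U.toScheme := c.resLE U W' le_rfl
  have hcUc : cU ≫ U.ι = W'.ι ≫ c := Scheme.Hom.resLE_comp_ι _ _
  haveI hcU : IsClosedImmersion cU := by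
    rw [show cU = c.resLE U (c ⁻¹ᵁ U) le_rfl from rfl, Scheme.Hom.resLE_eq_morphismRestrict]
    exact IsZariskiLocalAtTarget.restrict ‹IsClosedImmersion c› U
  haveI : IsAffine U.toScheme := hU
  obtain ⟨hWaff, hsurj⟩ := IsClosedImmersion.isAffine_surjective_of_isAffine (f := cU)
  -- range of gU is contained in range of cU
  have hr : Set.range gU.base ⊆ Set.range cU.base := by
    rintro _ ⟨t, rfl⟩
    obtain ⟨w, hw⟩ := h ⟨t, rfl⟩
    have hwU : w ∈ (W' : Set W) := by
      show c.base w ∈ (U : Set V)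
      rw [hw]; exact hrangeU ⟨t, rfl⟩
    obtain ⟨w0, hw0⟩ : w ∈ Set.range W'.ι.base := by rwa [Scheme.Opens.range_ι]
    refine ⟨w0, U.ι.isOpenEmbedding.injective ?_⟩
    have h1 : U.ι.base (cU.base w0) = c.base (W'.ι.base w0) := by
      rw [← Scheme.Hom.comp_apply, hcUc, Scheme.Hom.comp_apply]
    have h2 : U.ι.base (gU.base t) = g.base t := by
      rw [← Scheme.Hom.comp_apply, hgU]
    rw [h1, h2, hw0, hw]
  haveI hred : _root_.IsReduced ↑Γ(Spec R, ⊤) := inferInstance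
  set φ : Γ(U.toScheme, ⊤) ⟶ Γ(Spec R, ⊤) := gU.appTop with hφ
  set π : Γ(U.toScheme, ⊤) ⟶ Γ(W'.toScheme, ⊤) := cU.appTop with hπ
  have hnatg : Spec.map φ ≫ U.toScheme.isoSpec.inv = (Spec R).isoSpec.inv ≫ gU :=
    Scheme.isoSpec_inv_naturality gU
  have hnatc : Spec.map π ≫ U.toScheme.isoSpec.inv = W'.toScheme.isoSpec.inv ≫ cU :=
    Scheme.isoSpec_inv_naturality cU
  have hinvinj : Function.Injective (U.toScheme.isoSpec.inv.base) := by
    intro a b hab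
    have := congrArg (U.toScheme.isoSpec.hom.base) hab
    rw [← Scheme.Hom.comp_apply, ← Scheme.Hom.comp_apply, Iso.inv_hom_id] at this
    simpa using this
  -- range of Spec.map φ ⊆ range of Spec.map π
  have hr' : Set.range (Spec.map φ).base ⊆ Set.range (Spec.map π).base := by
    rintro _ ⟨q, rfl⟩
    obtain ⟨w, hw⟩ := hr ⟨(Spec R).isoSpec.inv.base q, rfl⟩
    refine ⟨W'.toScheme.isoSpec.hom.base w, hinvinj ?_⟩
    have e1 : U.toScheme.isoSpec.inv.base ((Spec.map π).base (W'.toScheme.isoSpec.hom.base w)) =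
        cU.base (W'.toScheme.isoSpec.inv.base (W'.toScheme.isoSpec.hom.base w)) := by
      rw [← Scheme.Hom.comp_apply, hnatc, Scheme.Hom.comp_apply]
    have e2 : W'.toScheme.isoSpec.inv.base (W'.toScheme.isoSpec.hom.base w) = w := by
      rw [← Scheme.Hom.comp_apply, Iso.hom_inv_id]; simp
    have e3 : U.toScheme.isoSpec.inv.base ((Spec.map φ).base q) =
        gU.base ((Spec R).isoSpec.inv.base q) := by
      rw [← Scheme.Hom.comp_apply, hnatg, Scheme.Hom.comp_apply]
    rw [e1, e2, hw, e3]
  -- kernel containment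
  have hker : RingHom.ker π.hom ≤ RingHom.ker φ.hom := by
    intro a ha
    rw [RingHom.mem_ker]
    have hnil : φ a ∈ nilradical Γ(Spec R, ⊤) := by
      rw [nilradical_eq_sInf, Submodule.mem_sInf]
      intro J hJ
      obtain ⟨p, hp⟩ := hr' ⟨⟨J, hJ⟩, rfl⟩
      have hmem : a ∈ ((Spec.map π).base p).asIdeal := by
        change a ∈ (PrimeSpectrum.comap π.hom p).asIdeal
        exact Ideal.mem_comap.mpr (by simpa [RingHom.mem_ker.mp ha] using p.asIdeal.zero_mem)
      rw [hp] at hmem; change a ∈ (PrimeSpectrum.comap φ.hom _).asIdeal at hmem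
      exact Ideal.mem_comap.mp hmem
    rw [nilradical_eq_zero] at hnil
    simpa using hnil
  -- construct ψ with ψ ∘ π = φ
  let e' : (Γ(↑U, ⊤) ⧸ RingHom.ker π.hom) ≃+* Γ(↑W', ⊤) := RingHom.quotientKerEquivOfSurjective hsurj
  let ψ0 : Γ(↑U, ⊤) ⧸ RingHom.ker π.hom →+* Γ(Spec R, ⊤) :=
    Ideal.Quotient.lift (RingHom.ker π.hom) φ.hom (fun a ha => RingHom.mem_ker.mp (hker ha))
  let ψ : Γ(↑W', ⊤) ⟶ Γ(Spec R, ⊤) := CommRingCat.ofHom (R := Γ(↑W', ⊤)) (S := Γ(Spec R, ⊤)) (ψ0.comp e'.symm.toRingHom)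
  have hψπ : π ≫ ψ = φ := by
    ext a
    show ψ0 (e'.symm (π a)) = φ a
    have he : e'.symm (π a) = Ideal.Quotient.mk (RingHom.ker π.hom) a := by
      rw [show π a = e' (Ideal.Quotient.mk (RingHom.ker π.hom) a) from (RingHom.kerLift_mk π.hom a).symm,
        RingEquiv.symm_apply_apply]
    rw [he]
    exact Ideal.Quotient.lift_mk (RingHom.ker π.hom) φ.hom _
  let l' : Spec R ⟶ W'.toScheme := (Spec R).isoSpec.hom ≫ Spec.map ψ ≫ W'.toScheme.isoSpec.inv
  have hl' : l' ≫ cU = gU := by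
    show ((Spec R).isoSpec.hom ≫ Spec.map ψ ≫ W'.toScheme.isoSpec.inv) ≫ cU = gU
    rw [Category.assoc, Category.assoc, ← hnatc, ← Spec.map_comp_assoc, hψπ, hnatg,
      Iso.hom_inv_id_assoc]
  exact ⟨l' ≫ W'.ι, by rw [Category.assoc, ← hcUc, ← Category.assoc, hl', hgU]⟩

open AlgebraicGeometry CategoryTheory

theorem image_of_generic_point_outside
    (k : Type*) [Field k] [IsAlgClosed k]
    (Xbar Ybar : Scheme) [IsIntegral Xbar] [IsIntegral Ybar]
    (fX : Xbar ⟶ Spec (CommRingCat.of k)) [IsProper fX]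
    (fY : Ybar ⟶ Spec (CommRingCat.of k))
    [IsSeparated fY] [LocallyOfFiniteType fY] [QuasiCompact fY]
    (hXnormal : ∀ x : Xbar, IsIntegrallyClosed (Xbar.presheaf.stalk x))
    (XO : Xbar.Opens) (hXdense : Dense (XO : Set Xbar))
    (YO : Ybar.Opens) (hYdense : Dense (YO : Set Ybar))
    (η : Ybar) (hη : IsGenericPoint η ((YO : Set Ybar)ᶜ))
    (i' : Ybar ⟶ Xbar) (hcomm : i' ≫ fX = fY)
    (e : YO ≤ i' ⁻¹ᵁ XO)
    (hclosed : IsClosedImmersion (i'.resLE XO YO e)) :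
    i'.base η ∉ XO := by
  intro hx
  set R := Ybar.presheaf.stalk η with hRdef
  haveI hdom : IsDomain ↑R :=
    Function.Injective.isDomain (algebraMap ↑R ↑Ybar.functionField)
      (IsFractionRing.injective _ _)
  haveI hRred : _root_.IsReduced ↑R := inferInstance
  set c : YO.toScheme ⟶ XO.toScheme := i'.resLE XO YO e with hcdef
  -- the image of any generalization of η lies in i'(YO)
  have himg : ∀ y : Ybar, y ⤳ η → i'.base y ∈ i'.base '' (YO : Set Ybar) := by
    intro y hy
    by_cases hmem : y ∈ YO
    · exact Set.mem_image_of_mem _ hmem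
    · have hyc : y ∈ closure {η} := by rw [hη]; exact hmem
      have : y = η := (hy.antisymm (specializes_iff_mem_closure.mpr hyc)).eq
      subst this
      -- closure argument
      have hC : IsClosed (Set.range c.base) := hclosed.base_closed.isClosed_range
      rw [XO.ι.isOpenEmbedding.isInducing.isClosed_iff] at hC
      obtain ⟨F, hF, hFeq⟩ := hC
      have h1 : i'.base '' (YO : Set Ybar) ⊆ F := by
        rintro _ ⟨z, hz, rfl⟩
        obtain ⟨w, hw⟩ : z ∈ Set.range YO.ι.base := by rwa [Scheme.Opens.range_ι]
        have : XO.ι.base (c.base w) = i'.base z := by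
          rw [← Scheme.Hom.comp_apply, Scheme.Hom.resLE_comp_ι, Scheme.Hom.comp_apply, hw]
        rw [← this]
        have hmF : c.base w ∈ XO.ι.base ⁻¹' F := by rw [hFeq]; exact Set.mem_range_self w
        exact hmF
      have h2 : i'.base y ∈ closure (i'.base '' (YO : Set Ybar)) := by
        apply image_closure_subset_closure_image i'.continuous
        exact ⟨y, by rw [hYdense.closure_eq]; trivial, rfl⟩
      have h3 : i'.base y ∈ F := closure_minimal h1 hF h2
      obtain ⟨v, hv⟩ : i'.base y ∈ Set.range XO.ι.base := by
        rwa [Scheme.Opens.range_ι]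
      have hvF : v ∈ XO.ι.base ⁻¹' F := by rw [Set.mem_preimage, hv]; exact h3
      rw [hFeq] at hvF
      obtain ⟨w, hw⟩ := hvF
      have hys : i'.base y = i'.base (YO.ι.base w) := by
        rw [← hv, ← hw, ← Scheme.Hom.comp_apply, Scheme.Hom.resLE_comp_ι,
          Scheme.Hom.comp_apply]
      rw [hys]
      exact Set.mem_image_of_mem _ (by rw [← Scheme.Opens.range_ι]; exact Set.mem_range_self w)
  have hYOsub : i'.base '' (YO : Set Ybar) ⊆ (XO : Set Xbar) := by
    rintro _ ⟨z, hz, rfl⟩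
    exact e hz
  -- the morphism from the local scheme at η
  set f1 : Spec R ⟶ Ybar := Ybar.fromSpecStalk η with hf1def
  set g : Spec R ⟶ Xbar := f1 ≫ i' with hgdef
  have hspec : ∀ t : Spec R, f1.base t ⤳ η := by
    intro t
    have : f1.base t ∈ Set.range f1.base := Set.mem_range_self t
    rwa [Scheme.range_fromSpecStalk] at this
  have hgmem : ∀ t : Spec R, g.base t ∈ i'.base '' (YO : Set Ybar) := by
    intro t
    rw [hgdef, Scheme.Hom.comp_apply]
    exact himg _ (hspec t)
  have hgXO : Set.range g.base ⊆ Set.range XO.ι.base := by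
    rintro _ ⟨t, rfl⟩
    rw [Scheme.Opens.range_ι]
    exact hYOsub (hgmem t)
  set g' : Spec R ⟶ XO.toScheme := IsOpenImmersion.lift XO.ι g hgXO with hg'def
  have hg'fac : g' ≫ XO.ι = g := IsOpenImmersion.lift_fac _ _ _
  have hb : Set.range g'.base ⊆ Set.range c.base := by
    rintro _ ⟨t, rfl⟩
    obtain ⟨z, hz, hz'⟩ := hgmem t
    obtain ⟨w, hw⟩ : z ∈ Set.range YO.ι.base := by rwa [Scheme.Opens.range_ι]
    refine ⟨w, XO.ι.isOpenEmbedding.injective ?_⟩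
    have h1 : XO.ι.base (c.base w) = i'.base z := by
      rw [← Scheme.Hom.comp_apply, Scheme.Hom.resLE_comp_ι, Scheme.Hom.comp_apply, hw]
    have h2 : XO.ι.base (g'.base t) = g.base t := by
      rw [← Scheme.Hom.comp_apply, hg'fac]
    rw [h1, h2, hz']
  obtain ⟨l, hl⟩ := exists_lift_of_isClosedImmersion c g' hb
  set f2 : Spec R ⟶ Ybar := l ≫ YO.ι with hf2def
  have hf2i : f2 ≫ i' = g := by
    rw [hf2def, Category.assoc, ← Scheme.Hom.resLE_comp_ι i' e, ← Category.assoc, hl, hg'fac]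
  -- the generic point
  have hξη : genericPoint Ybar ⤳ η := (genericPoint_spec Ybar).specializes trivial
  set ι : Spec (Ybar.presheaf.stalk (genericPoint Ybar)) ⟶ Spec R :=
    Spec.map (Ybar.presheaf.stalkSpecializes hξη) with hιdef
  have hι : ι ≫ f1 = Ybar.fromSpecStalk (genericPoint Ybar) :=
    Scheme.SpecMap_stalkSpecializes_fromSpecStalk hξη
  haveI hιdom : IsDominant ι := by
    constructor
    have hinj : Function.Injective (Ybar.presheaf.stalkSpecializes hξη) := by
      show Function.Injective (algebraMap ↑R ↑Ybar.functionField)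
      exact IsFractionRing.injective _ _
    rw [hιdef, Spec.map_base]
    refine (PrimeSpectrum.denseRange_comap_iff_ker_le_nilRadical _).mpr ?_
    intro a ha
    rw [RingHom.mem_ker] at ha
    have : a = 0 := hinj (by simpa using ha)
    simp [this]
  -- the generic point lies in YO
  have hξYO : genericPoint Ybar ∈ YO :=
    ((genericPoint_spec Ybar).mem_open_set_iff YO.isOpen).mpr (by simpa using hYdense.nonempty)
  have hrangeξ : Set.range (ι ≫ f1).base ⊆ Set.range YO.ι.base := by
    rintro _ ⟨t, rfl⟩
    rw [Scheme.Opens.range_ι]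
    have h1 : (ι ≫ f1).base t ∈ Set.range (Ybar.fromSpecStalk (genericPoint Ybar)).base := by
      rw [← hι]; exact Set.mem_range_self t
    rw [Scheme.range_fromSpecStalk] at h1
    have h2 : (ι ≫ f1).base t ⤳ genericPoint Ybar := h1
    have h3 : genericPoint Ybar ⤳ (ι ≫ f1).base t :=
      (genericPoint_spec Ybar).specializes trivial
    rw [(h2.antisymm h3).eq]
    exact hξYO
  set m : Spec (Ybar.presheaf.stalk (genericPoint Ybar)) ⟶ YO.toScheme :=
    IsOpenImmersion.lift YO.ι (ι ≫ f1) hrangeξ with hmdef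
  have hm : m ≫ YO.ι = ι ≫ f1 := IsOpenImmersion.lift_fac _ _ _
  have h1 : m ≫ c = ι ≫ g' := by
    rw [← cancel_mono XO.ι]
    rw [Category.assoc, Scheme.Hom.resLE_comp_ι, ← Category.assoc, hm,
      Category.assoc, Category.assoc, hg'fac]
  have h2 : ι ≫ l = m := by
    rw [← cancel_mono c, Category.assoc, hl, h1]
  have hcompat : ι ≫ f1 = ι ≫ f2 := by
    rw [hf2def, ← Category.assoc, h2, hm]
  have hfY : f1 ≫ fY = f2 ≫ fY := by
    rw [← hcomm, ← Category.assoc, ← Category.assoc, ← hgdef, hf2i]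
  have hf12 : f1 = f2 := ext_of_isDominant_of_isSeparated fY hfY ι hcompat
  -- contradiction: η ∉ YO but f2 maps the closed point into YO
  have hηY : η ∉ YO := by
    have : η ∈ ((YO : Set Ybar)ᶜ) := hη.mem
    exact this
  apply hηY
  have hev : f1.base (IsLocalRing.closedPoint ↑R) = η := Scheme.fromSpecStalk_closedPoint
  rw [hf12] at hev
  rw [← hev, hf2def]
  show YO.ι.base (l.base (IsLocalRing.closedPoint ↑R)) ∈ YO
  have hfin : YO.ι.base (l.base (IsLocalRing.closedPoint ↑R)) ∈ Set.range YO.ι.base :=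
    Set.mem_range_self _
  rw [Scheme.Opens.range_ι] at hfin
  exact hfin
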